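/- arXiv:2602.16260 — 2 statements merged into one kernel-verified Lean document; each statement's English description precedes it below -/
import Mathlib

section
/- Let α₁, β₁, T > 0 and set γ₁ := Γ(1/4)² / (2·α₁^{1/2}·Γ(1/2)) · (α₁/β₁)^{1/4}. If x : ℝ → ℝ satisfies, for every t ≥ 0, that x is differentiable at t with derivative x'(t) = −(γ₁/T)·(α₁·|x(t)| + β₁·|x(t)|³)^{1/2}·sign(x(t)), then x(t) = 0 for every t ≥ T. (Predefined-time convergence of the reduced sliding-mode dynamics of the fixed-time tracking controller, with settling time at most the user-chosen time T.) -/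
open Real

namespace ReducedSlidingAux
open Set MeasureTheory

lemma aux_beta : ∫ w in Ioo (0:ℝ) 1, w ^ (-(3:ℝ)/4) * (1-w) ^ (-(3:ℝ)/4)
    = Real.Gamma (1/4) ^ 2 / Real.Gamma (1/2) := by
  have h := Complex.Gamma_mul_Gamma_eq_betaIntegral (s := 1/4) (t := 1/4) (by norm_num) (by norm_num)
  have hbeta : Complex.betaIntegral (1/4) (1/4)
      = ((∫ w in Ioo (0:ℝ) 1, w ^ (-(3:ℝ)/4) * (1-w) ^ (-(3:ℝ)/4) : ℝ) : ℂ) := by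
    rw [Complex.betaIntegral, intervalIntegral.integral_of_le zero_le_one,
      MeasureTheory.integral_Ioc_eq_integral_Ioo]
    have : ∀ x ∈ Ioo (0:ℝ) 1, (x:ℂ) ^ ((1:ℂ)/4 - 1) * ((1:ℂ) - x) ^ ((1:ℂ)/4 - 1)
        = ((x ^ (-(3:ℝ)/4) * (1-x) ^ (-(3:ℝ)/4) : ℝ) : ℂ) := by
      intro x hx
      obtain ⟨hx0, hx1⟩ := hx
      have h1 : (x:ℂ) ^ ((1:ℂ)/4 - 1) = ((x ^ (-(3:ℝ)/4) : ℝ) : ℂ) := by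
        rw [Complex.ofReal_cpow hx0.le]
        norm_num
      have h2 : ((1:ℂ) - x) ^ ((1:ℂ)/4 - 1) = (((1-x) ^ (-(3:ℝ)/4) : ℝ) : ℂ) := by
        rw [show ((1:ℂ) - x) = ((1 - x : ℝ) : ℂ) by push_cast; ring,
          Complex.ofReal_cpow (by linarith)]
        norm_num
      rw [h1, h2, ← Complex.ofReal_mul]
    rw [setIntegral_congr_fun measurableSet_Ioo this]
    exact integral_ofReal
  rw [hbeta] at h
  rw [show ((1:ℂ)/4 + 1/4) = ((1/2 : ℝ) : ℂ) by norm_num] at h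
  rw [show ((1:ℂ)/4) = ((1/4:ℝ):ℂ) by norm_num] at h
  rw [Complex.Gamma_ofReal, Complex.Gamma_ofReal, ← Complex.ofReal_mul, ← Complex.ofReal_mul] at h
  have h' := Complex.ofReal_injective h
  have hpos : Real.Gamma (1/2) ≠ 0 := (Real.Gamma_pos_of_pos (by norm_num)).ne'
  field_simp
  rw [sq]
  linarith [h']


lemma aux_J : ∫ t in Ioi (0:ℝ), t ^ (-(3:ℝ)/4) * (1+t) ^ (-(1:ℝ)/2)
    = ∫ w in Ioo (0:ℝ) 1, w ^ (-(3:ℝ)/4) * (1-w) ^ (-(3:ℝ)/4) := by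
  have himg : (fun w : ℝ => w / (1 - w)) '' Ioo 0 1 = Ioi 0 := by
    ext t
    constructor
    · rintro ⟨w, ⟨hw0, hw1⟩, rfl⟩
      exact div_pos hw0 (by linarith)
    · intro ht
      have ht' : (0:ℝ) < t := ht
      refine ⟨t / (1 + t), ⟨div_pos ht' (by linarith), ?_⟩, ?_⟩
      · rw [div_lt_one (by linarith)]; linarith
      · field_simp; ring
  have hderiv : ∀ w ∈ Ioo (0:ℝ) 1, HasDerivWithinAt (fun w : ℝ => w / (1 - w))
      ((1 - w) ^ (-(2:ℝ))) (Ioo 0 1) w := by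
    intro w ⟨hw0, hw1⟩
    have hne : (1 : ℝ) - w ≠ 0 := by linarith
    have := (hasDerivAt_id w).div ((hasDerivAt_id w).const_sub 1) hne
    refine this.hasDerivWithinAt.congr_deriv ?_
    simp only [id]
    rw [Real.rpow_neg (by linarith), Real.rpow_two]
    field_simp
    ring
  have hinj : InjOn (fun w : ℝ => w / (1 - w)) (Ioo 0 1) := by
    intro a ⟨ha0, ha1⟩ b ⟨hb0, hb1⟩ h
    have ha : (1:ℝ) - a ≠ 0 := by linarith
    have hb : (1:ℝ) - b ≠ 0 := by linarith
    field_simp at h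
    linarith
  have := integral_image_eq_integral_abs_deriv_smul measurableSet_Ioo hderiv hinj
    (fun t => t ^ (-(3:ℝ)/4) * (1+t) ^ (-(1:ℝ)/2))
  rw [himg] at this
  rw [this]
  refine setIntegral_congr_fun measurableSet_Ioo (fun w hw => ?_)
  obtain ⟨hw0, hw1⟩ := hw
  have h1w : (0:ℝ) < 1 - w := by linarith
  have e1 : (w / (1 - w)) ^ (-(3:ℝ)/4) = w ^ (-(3:ℝ)/4) * (1 - w) ^ ((3:ℝ)/4) := by
    rw [Real.div_rpow hw0.le h1w.le, div_eq_mul_inv, ← Real.rpow_neg h1w.le]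
    norm_num
  have e2 : ((1:ℝ) + w / (1 - w)) ^ (-(1:ℝ)/2) = (1 - w) ^ ((1:ℝ)/2) := by
    have : (1:ℝ) + w / (1 - w) = (1 - w)⁻¹ := by field_simp; ring
    rw [this, ← Real.rpow_neg_one, ← Real.rpow_mul h1w.le]
    norm_num
  have habs : |(1 - w) ^ (-(2:ℝ))| = (1 - w) ^ (-(2:ℝ)) :=
    abs_of_nonneg (Real.rpow_nonneg h1w.le _)
  rw [smul_eq_mul, habs, e1, e2]
  rw [show w ^ (-(3:ℝ)/4) * (1 - w) ^ ((3:ℝ)/4) * (1 - w) ^ ((1:ℝ)/2)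
      = w ^ (-(3:ℝ)/4) * ((1 - w) ^ ((3:ℝ)/4) * (1 - w) ^ ((1:ℝ)/2)) by ring,
    ← Real.rpow_add h1w, mul_comm ((1 - w) ^ (-(2:ℝ))), mul_assoc, ← Real.rpow_add h1w]
  norm_num


lemma aux_I2 : ∫ x in Ioi (0:ℝ), (x + x^3) ^ (-(1:ℝ)/2)
    = (1/2) * ∫ t in Ioi (0:ℝ), t ^ (-(3:ℝ)/4) * (1+t) ^ (-(1:ℝ)/2) := by
  have h := MeasureTheory.integral_comp_rpow_Ioi_of_pos
    (g := fun t : ℝ => (1/2) * (t ^ (-(3:ℝ)/4) * (1+t) ^ (-(1:ℝ)/2))) (p := 2) (by norm_num)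
  rw [← MeasureTheory.integral_const_mul, ← h]
  refine setIntegral_congr_fun measurableSet_Ioi (fun s hs => ?_)
  have hs0 : (0:ℝ) < s := hs
  simp only [smul_eq_mul]
  have hsq : s ^ (2:ℝ) = s ^ 2 := by
    rw [← Real.rpow_natCast s 2]; norm_num
  have e0 : (s ^ (2:ℝ)) ^ (-(3:ℝ)/4) = s ^ (-(3:ℝ)/2) := by
    rw [← Real.rpow_mul hs0.le]; norm_num
  have e1 : (s + s^3) ^ (-(1:ℝ)/2) = s ^ (-(1:ℝ)/2) * (1 + s^2) ^ (-(1:ℝ)/2) := by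
    rw [show s + s^3 = s * (1 + s^2) by ring, Real.mul_rpow hs0.le (by positivity)]
  rw [e1, e0, hsq]
  rw [show (2:ℝ)-1 = 1 by norm_num, Real.rpow_one]
  have h2 : s ^ (-(1:ℝ)/2) = s ^ (-(3:ℝ)/2) * s := by
    rw [← Real.rpow_add_one hs0.ne']; norm_num
  rw [h2]
  ring

lemma aux_L (α₁ β₁ : ℝ) (hα : 0 < α₁) (hβ : 0 < β₁) :
    ∫ u in Ioi (0:ℝ), (α₁*u + β₁*u^3) ^ (-(1:ℝ)/2)
      = Real.Gamma (1/4) ^ 2 / (2 * α₁ ^ ((1:ℝ)/2) * Real.Gamma (1/2)) * (α₁/β₁) ^ ((1:ℝ)/4) := by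
  set c : ℝ := (α₁/β₁) ^ ((1:ℝ)/2) with hc_def
  have hab : (0:ℝ) < α₁/β₁ := div_pos hα hβ
  have hc : 0 < c := Real.rpow_pos_of_pos hab _
  have hscale := MeasureTheory.integral_comp_mul_left_Ioi
    (fun u => (α₁*u + β₁*u^3) ^ (-(1:ℝ)/2)) 0 hc
  rw [mul_zero] at hscale
  have hc2 : c ^ 2 = α₁/β₁ := by
    rw [← Real.rpow_natCast c 2, hc_def, ← Real.rpow_mul hab.le]; norm_num
  have hcongr : ∫ x in Ioi (0:ℝ), (α₁*(c*x) + β₁*(c*x)^3) ^ (-(1:ℝ)/2)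
      = (α₁*c) ^ (-(1:ℝ)/2) * ∫ x in Ioi (0:ℝ), (x + x^3) ^ (-(1:ℝ)/2) := by
    rw [← MeasureTheory.integral_const_mul]
    refine setIntegral_congr_fun measurableSet_Ioi (fun s hs => ?_)
    have hs0 : (0:ℝ) < s := hs
    have hbase : α₁*(c*s) + β₁*(c*s)^3 = (α₁*c) * (s + s^3) := by
      have : β₁ * c^2 = α₁ := by rw [hc2]; field_simp
      linear_combination (c*s^3) * this
    rw [hbase, Real.mul_rpow (by positivity) (by positivity)]
  have hL : ∫ u in Ioi (0:ℝ), (α₁*u + β₁*u^3) ^ (-(1:ℝ)/2)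
      = c * ((α₁*c) ^ (-(1:ℝ)/2) * ((1/2) * (Real.Gamma (1/4) ^ 2 / Real.Gamma (1/2)))) := by
    rw [← aux_beta, ← aux_J, ← aux_I2, ← hcongr]
    rw [hscale, smul_eq_mul]
    field_simp
    simp only [mul_comm]
  rw [hL]
  set q : ℝ := (α₁/β₁) ^ ((1:ℝ)/4) with hq_def
  have hq : 0 < q := Real.rpow_pos_of_pos hab _
  have hcq : c = q^2 := by
    rw [← Real.rpow_natCast q 2, hq_def, ← Real.rpow_mul hab.le]; norm_num [hc_def]
  have hqc : c ^ ((1:ℝ)/2) = q := by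
    rw [hc_def, ← Real.rpow_mul hab.le]; norm_num [hq_def]
  have hsplit : (α₁*c) ^ (-(1:ℝ)/2) = (α₁ ^ ((1:ℝ)/2))⁻¹ * (c ^ ((1:ℝ)/2))⁻¹ := by
    rw [show (-(1:ℝ)/2) = -((1:ℝ)/2) by norm_num, Real.rpow_neg (by positivity),
      Real.mul_rpow hα.le hc.le, mul_inv]
  rw [hsplit, hqc]
  have hGa : Real.Gamma (1/2) ≠ 0 := (Real.Gamma_pos_of_pos (by norm_num)).ne'
  have hA : α₁ ^ ((1:ℝ)/2) ≠ 0 := (Real.rpow_pos_of_pos hα _).ne'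
  rw [hcq]
  field_simp


lemma aux_cont (α₁ β₁ : ℝ) (hα : 0 < α₁) (hβ : 0 < β₁) :
    ContinuousOn (fun u : ℝ => (α₁*u + β₁*u^3) ^ (-(1:ℝ)/2)) (Ioi 0) := by
  apply ContinuousOn.rpow_const (by fun_prop)
  intro u hu
  have hu0 : (0:ℝ) < u := hu
  exact Or.inl (by positivity)

lemma aux_int (α₁ β₁ : ℝ) (hα : 0 < α₁) (hβ : 0 < β₁) :
    IntegrableOn (fun u : ℝ => (α₁*u + β₁*u^3) ^ (-(1:ℝ)/2)) (Ioi 0) := by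
  have hcont := aux_cont α₁ β₁ hα hβ
  rw [← Set.Ioc_union_Ioi_eq_Ioi (zero_le_one)]
  apply IntegrableOn.union
  · -- on Ioc 0 1, dominate by α₁^(-1/2) * u^(-1/2)
    have hdom : IntegrableOn (fun u : ℝ => α₁ ^ (-(1:ℝ)/2) * u ^ (-(1:ℝ)/2)) (Ioc 0 1) :=
      (((intervalIntegral.intervalIntegrable_rpow' (by norm_num : (-1:ℝ) < -(1:ℝ)/2)).1).const_mul _)
    refine hdom.integrable.mono ((hcont.mono Ioc_subset_Ioi_self).aestronglyMeasurable measurableSet_Ioc) ?_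
    filter_upwards [ae_restrict_mem measurableSet_Ioc] with u hu
    obtain ⟨hu0, hu1⟩ := hu
    have hb : (0:ℝ) < α₁ * u := by positivity
    have hle : (α₁*u + β₁*u^3) ^ (-(1:ℝ)/2) ≤ (α₁*u) ^ (-(1:ℝ)/2) :=
      Real.rpow_le_rpow_of_nonpos hb (by nlinarith [mul_pos hβ (pow_pos hu0 3)]) (by norm_num)
    rw [Real.norm_eq_abs, Real.norm_eq_abs, abs_of_nonneg (Real.rpow_nonneg (by positivity) _),
      abs_of_nonneg (by positivity)]
    calc (α₁*u + β₁*u^3) ^ (-(1:ℝ)/2) ≤ (α₁*u) ^ (-(1:ℝ)/2) := hle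
      _ = α₁ ^ (-(1:ℝ)/2) * u ^ (-(1:ℝ)/2) := Real.mul_rpow hα.le hu0.le
  · -- on Ioi 1, dominate by β₁^(-1/2) * u^(-3/2)
    have hdom : IntegrableOn (fun u : ℝ => β₁ ^ (-(1:ℝ)/2) * u ^ (-(3:ℝ)/2)) (Ioi 1) :=
      (integrableOn_Ioi_rpow_of_lt (by norm_num : (-(3:ℝ)/2) < -1) one_pos).const_mul _
    refine hdom.integrable.mono ((hcont.mono (Ioi_subset_Ioi zero_le_one)).aestronglyMeasurable measurableSet_Ioi) ?_
    filter_upwards [ae_restrict_mem measurableSet_Ioi] with u hu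
    have hu1 : (1:ℝ) < u := hu
    have hu0 : (0:ℝ) < u := by linarith
    have hb : (0:ℝ) < β₁ * u^3 := by positivity
    have hle : (α₁*u + β₁*u^3) ^ (-(1:ℝ)/2) ≤ (β₁*u^3) ^ (-(1:ℝ)/2) :=
      Real.rpow_le_rpow_of_nonpos hb (by nlinarith [mul_pos hα hu0]) (by norm_num)
    rw [Real.norm_eq_abs, Real.norm_eq_abs, abs_of_nonneg (Real.rpow_nonneg (by positivity) _),
      abs_of_nonneg (by positivity)]
    calc (α₁*u + β₁*u^3) ^ (-(1:ℝ)/2) ≤ (β₁*u^3) ^ (-(1:ℝ)/2) := hle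
      _ = β₁ ^ (-(1:ℝ)/2) * u ^ (-(3:ℝ)/2) := by
          rw [Real.mul_rpow hβ.le (by positivity), ← Real.rpow_natCast u 3,
            ← Real.rpow_mul hu0.le]
          norm_num


lemma aux_stay (a b : ℝ) (hab : a < b) (z d : ℝ → ℝ)
    (hz : ∀ t ∈ Icc a b, HasDerivAt z (d t) t) (hza : z a = 0) (hzb : 0 < z b)
    (hneg : ∀ t ∈ Icc a b, 0 < z t → d t < 0) : False := by
  have hzc : ContinuousOn z (Icc a b) := fun t ht => (hz t ht).continuousAt.continuousWithinAt
  set S : Set ℝ := Icc a b ∩ z ⁻¹' {0} with hS_def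
  have hSclosed : IsClosed S := hzc.preimage_isClosed_of_isClosed isClosed_Icc isClosed_singleton
  have hSne : S.Nonempty := ⟨a, ⟨le_rfl, hab.le⟩, by simpa using hza⟩
  have hSbdd : BddAbove S := ⟨b, fun t ht => ht.1.2⟩
  set s : ℝ := sSup S with hs_def
  have hsS : s ∈ S := hSclosed.csSup_mem hSne hSbdd
  have hzs : z s = 0 := hsS.2
  have has : a ≤ s := hsS.1.1
  have hsb : s ≤ b := hsS.1.2
  have hsb' : s < b := lt_of_le_of_ne hsb (fun h => by rw [h] at hzs; linarith)
  have hpos' : ∀ t ∈ Ioc s b, 0 < z t := by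
    intro t ⟨hst, htb⟩
    rcases lt_trichotomy (z t) 0 with hlt | heq | hgt
    · obtain ⟨c, hc, hc0⟩ := intermediate_value_Icc htb
        (hzc.mono (Icc_subset_Icc (has.trans hst.le) le_rfl)) ⟨hlt.le, hzb.le⟩
      have hcS : c ∈ S := ⟨⟨has.trans (hst.le.trans hc.1), hc.2⟩, by simpa using hc0⟩
      have := le_csSup hSbdd hcS
      linarith [hst.trans_le hc.1]
    · have htS : t ∈ S := ⟨⟨has.trans hst.le, htb⟩, by simpa using heq⟩
      have := le_csSup hSbdd htS
      linarith
    · exact hgt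
  have hanti : StrictAntiOn z (Icc s b) :=
    strictAntiOn_of_deriv_neg (convex_Icc s b)
      (hzc.mono (Icc_subset_Icc has le_rfl))
      (by
        intro t ht
        rw [interior_Icc] at ht
        have htI : t ∈ Icc a b := ⟨has.trans ht.1.le, ht.2.le⟩
        rw [(hz t htI).deriv]
        exact hneg t htI (hpos' t ⟨ht.1, ht.2.le⟩))
  have := hanti ⟨le_rfl, hsb⟩ ⟨hsb, le_rfl⟩ hsb'
  rw [hzs] at this
  linarith

end ReducedSlidingAux

open ReducedSlidingAux Set MeasureTheory in
/-- Predefined-time convergence of the reduced sliding-mode dynamics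
`ẋ = -(γ₁/T)(α₁|x| + β₁|x|³)^{1/2} sign(x)`, with settling time at most the
user-chosen time `T`. -/
theorem reduced_sliding_dynamics_predefined_time
    (α₁ β₁ T : ℝ) (hα₁ : 0 < α₁) (hβ₁ : 0 < β₁) (hT : 0 < T)
    (γ₁ : ℝ)
    (hγ₁ : γ₁ = Real.Gamma (1 / 4) ^ 2 / (2 * α₁ ^ ((1 : ℝ) / 2) * Real.Gamma (1 / 2)) *
        (α₁ / β₁) ^ ((1 : ℝ) / 4))
    (x : ℝ → ℝ)
    (hx : ∀ t : ℝ, 0 ≤ t →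
      HasDerivAt x
        (-(γ₁ / T) * (α₁ * |x t| + β₁ * |x t| ^ (3 : ℝ)) ^ ((1 : ℝ) / 2) * Real.sign (x t)) t) :
    ∀ t : ℝ, T ≤ t → x t = 0 := by
  have hγpos : 0 < γ₁ := by
    rw [hγ₁]
    have h4 := Real.Gamma_pos_of_pos (show (0:ℝ) < 1/4 by norm_num)
    have h2 := Real.Gamma_pos_of_pos (show (0:ℝ) < 1/2 by norm_num)
    have := Real.rpow_pos_of_pos hα₁ ((1:ℝ)/2)
    have := Real.rpow_pos_of_pos (div_pos hα₁ hβ₁) ((1:ℝ)/4)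
    positivity
  -- cube rewrite helper
  have hcube : ∀ v : ℝ, v ^ (3:ℝ) = v ^ 3 := by
    intro v; rw [← Real.rpow_natCast v 3]; norm_num
  -- the antiderivative g
  set f : ℝ → ℝ := fun u => (α₁*u + β₁*u^3) ^ (-(1:ℝ)/2) with hf_def
  set g : ℝ → ℝ := fun v => ∫ u in (0:ℝ)..v, f u with hg_def
  have hfint := aux_int α₁ β₁ hα₁ hβ₁
  have hfcont := aux_cont α₁ β₁ hα₁ hβ₁
  have hgderiv : ∀ v : ℝ, 0 < v → HasDerivAt g (f v) v := by
    intro v hv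
    exact intervalIntegral.integral_hasDerivAt_right
      ((intervalIntegrable_iff_integrableOn_Ioc_of_le hv.le).mpr
        (hfint.mono_set Ioc_subset_Ioi_self))
      (hfcont.stronglyMeasurableAtFilter isOpen_Ioi v hv)
      (hfcont.continuousAt (isOpen_Ioi.mem_nhds hv))
  have hgnonneg : ∀ v : ℝ, 0 ≤ v → 0 ≤ g v := by
    intro v hv
    apply intervalIntegral.integral_nonneg hv
    intro u hu
    exact Real.rpow_nonneg
      (add_nonneg (mul_nonneg hα₁.le hu.1) (mul_nonneg hβ₁.le (pow_nonneg hu.1 3))) _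
  have hglt : ∀ v : ℝ, 0 ≤ v → g v < γ₁ := by
    intro v hv
    have hsplit : ∫ u in Ioi (0:ℝ), f u = (∫ u in Ioc (0:ℝ) v, f u) + ∫ u in Ioi v, f u := by
      rw [← MeasureTheory.setIntegral_union (Ioc_disjoint_Ioi le_rfl) measurableSet_Ioi
        (hfint.mono_set Ioc_subset_Ioi_self) (hfint.mono_set (Ioi_subset_Ioi hv)),
        Set.Ioc_union_Ioi_eq_Ioi hv]
    have hpos : 0 < ∫ u in Ioi v, f u := by
      rw [setIntegral_pos_iff_support_of_nonneg_ae]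
      · have hsub : Ioi v ⊆ Function.support f ∩ Ioi v := by
          intro u hu
          have hu0 : 0 < u := lt_of_le_of_lt hv hu
          refine ⟨?_, hu⟩
          simp only [Function.mem_support, hf_def]
          exact (Real.rpow_pos_of_pos (by positivity) _).ne'
        calc (0:ENNReal) < volume (Ioi v) := by simp [Real.volume_Ioi]
          _ ≤ volume (Function.support f ∩ Ioi v) := measure_mono hsub
      · filter_upwards [ae_restrict_mem measurableSet_Ioi] with u hu
        have hu0 : 0 < u := lt_of_le_of_lt hv hu
        exact Real.rpow_nonneg (by positivity) _
      · exact hfint.mono_set (Ioi_subset_Ioi hv)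
    have hgv : g v = ∫ u in Ioc (0:ℝ) v, f u := intervalIntegral.integral_of_le hv
    have hLγ : ∫ u in Ioi (0:ℝ), f u = γ₁ := by rw [hγ₁]; exact aux_L α₁ β₁ hα₁ hβ₁
    rw [hgv]; linarith [hsplit, hpos, hLγ]
  -- key contradiction lemma for positive solutions on [0,T]
  have key : ∀ z : ℝ → ℝ,
      (∀ t ∈ Icc (0:ℝ) T, HasDerivAt z (-(γ₁/T) * (α₁ * z t + β₁ * (z t)^3) ^ ((1:ℝ)/2)) t) →
      (∀ t ∈ Icc (0:ℝ) T, 0 < z t) → False := by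
    intro z hz hp
    set F : ℝ → ℝ := fun t => g (z t) + (γ₁/T) * t with hF_def
    have hF : ∀ t ∈ Icc (0:ℝ) T, HasDerivAt F 0 t := by
      intro t ht
      have hzt := hp t ht
      have hA : 0 < α₁ * z t + β₁ * (z t)^3 := by positivity
      have h1 : HasDerivAt (fun s => g (z s))
          (f (z t) * (-(γ₁/T) * (α₁ * z t + β₁ * (z t)^3) ^ ((1:ℝ)/2))) t :=
        (hgderiv (z t) hzt).comp t (hz t ht)
      have h2 : HasDerivAt (fun s : ℝ => (γ₁/T) * s) (γ₁/T) t := by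
        simpa using (hasDerivAt_id t).const_mul (γ₁/T)
      have h3 := h1.add h2
      have hmul : (α₁ * z t + β₁ * (z t)^3) ^ (-(1:ℝ)/2)
          * (α₁ * z t + β₁ * (z t)^3) ^ ((1:ℝ)/2) = 1 := by
        rw [← Real.rpow_add hA]; norm_num
      have : f (z t) * (-(γ₁/T) * (α₁ * z t + β₁ * (z t)^3) ^ ((1:ℝ)/2)) + γ₁/T = 0 := by
        simp only [hf_def]
        rw [show (α₁ * z t + β₁ * (z t)^3) ^ (-(1:ℝ)/2)
            * (-(γ₁/T) * (α₁ * z t + β₁ * (z t)^3) ^ ((1:ℝ)/2))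
            = -(γ₁/T) * ((α₁ * z t + β₁ * (z t)^3) ^ (-(1:ℝ)/2)
              * (α₁ * z t + β₁ * (z t)^3) ^ ((1:ℝ)/2)) by ring, hmul]
        ring
      rw [← this]
      exact h3
    have hFc : ContinuousOn F (Icc 0 T) := fun t ht => (hF t ht).continuousAt.continuousWithinAt
    have hconst := constant_of_has_deriv_right_zero hFc
      (fun t ht => (hF t (Ico_subset_Icc_self ht)).hasDerivWithinAt)
    have hFT := hconst T ⟨hT.le, le_rfl⟩
    simp only [hF_def] at hFT
    rw [mul_zero, add_zero, div_mul_cancel₀ γ₁ hT.ne'] at hFT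
    have h1 := hgnonneg (z T) (hp T ⟨hT.le, le_rfl⟩).le
    have h2 := hglt (z 0) (hp 0 ⟨le_rfl, hT.le⟩).le
    linarith
  -- continuity of x on [0,∞)
  have hxc : ∀ t : ℝ, 0 ≤ t → ContinuousAt x t := fun t ht => (hx t ht).continuousAt
  -- hitting time: x vanishes somewhere in [0,T]
  have hit : ∃ t₀ ∈ Icc (0:ℝ) T, x t₀ = 0 := by
    by_contra h
    push_neg at h
    have hxcc : ContinuousOn x (Icc 0 T) := fun t ht => (hxc t ht.1).continuousWithinAt
    have hsign : (∀ t ∈ Icc (0:ℝ) T, 0 < x t) ∨ (∀ t ∈ Icc (0:ℝ) T, x t < 0) := by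
      rcases lt_or_gt_of_ne (h 0 ⟨le_rfl, hT.le⟩) with h0 | h0
      · right
        intro t ht
        rcases lt_or_gt_of_ne (h t ht) with h' | h'
        · exact h'
        · exfalso
          obtain ⟨c, hc, hc0⟩ := intermediate_value_Icc ht.1
            (hxcc.mono (Icc_subset_Icc le_rfl ht.2)) ⟨h0.le, h'.le⟩
          exact h c ⟨hc.1, hc.2.trans ht.2⟩ hc0
      · left
        intro t ht
        rcases lt_or_gt_of_ne (h t ht) with h' | h'
        · exfalso
          obtain ⟨c, hc, hc0⟩ := intermediate_value_Icc' ht.1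
            (hxcc.mono (Icc_subset_Icc le_rfl ht.2)) ⟨h'.le, h0.le⟩
          exact h c ⟨hc.1, hc.2.trans ht.2⟩ hc0
        · exact h'
    rcases hsign with hpos | hneg
    · apply key x _ hpos
      intro t ht
      have hd := hx t ht.1
      have hxt := hpos t ht
      rw [Real.sign_of_pos hxt, mul_one, abs_of_pos hxt, hcube (x t)] at hd
      exact hd
    · apply key (fun t => -x t) _ (fun t ht => by simpa using (hneg t ht))
      intro t ht
      have hd := (hx t ht.1).neg
      have hxt := hneg t ht
      rw [Real.sign_of_neg hxt, abs_of_neg hxt, hcube (-x t)] at hd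
      refine hd.congr_deriv ?_
      ring
  -- conclusion
  intro t ht
  obtain ⟨t₀, ht₀, hx0⟩ := hit
  by_contra hne
  have h0t : t₀ < t := by
    rcases eq_or_lt_of_le (ht₀.2.trans ht) with h | h
    · exact absurd (h ▸ hx0) hne
    · exact h
  have hderivIcc : ∀ s ∈ Icc t₀ t, HasDerivAt x
      (-(γ₁/T) * (α₁ * |x s| + β₁ * |x s| ^ (3:ℝ)) ^ ((1:ℝ)/2) * Real.sign (x s)) s :=
    fun s hs => hx s (ht₀.1.trans hs.1)
  rcases lt_or_gt_of_ne hne with hlt | hgt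
  · -- x t < 0 : use z = -x
    refine aux_stay t₀ t h0t (fun s => -x s)
      (fun s => -(-(γ₁/T) * (α₁ * |x s| + β₁ * |x s| ^ (3:ℝ)) ^ ((1:ℝ)/2) * Real.sign (x s)))
      (fun s hs => (hderivIcc s hs).neg) (by simp [hx0]) (by simpa using hlt) ?_
    intro s hs hzs
    have hxs : x s < 0 := by linarith [neg_pos.mp hzs]
    simp only [Real.sign_of_neg hxs]
    have hA : 0 < α₁ * |x s| + β₁ * |x s| ^ (3:ℝ) := by
      have h1 : 0 < |x s| := abs_pos.mpr hxs.ne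
      have h2 : 0 < |x s| ^ (3:ℝ) := Real.rpow_pos_of_pos h1 _
      positivity
    have := mul_pos (mul_pos (div_pos hγpos hT) (Real.rpow_pos_of_pos hA ((1:ℝ)/2)))
      (show (0:ℝ) < 1 by norm_num)
    nlinarith [this]
  · -- x t > 0 : use z = x
    refine aux_stay t₀ t h0t x
      (fun s => -(γ₁/T) * (α₁ * |x s| + β₁ * |x s| ^ (3:ℝ)) ^ ((1:ℝ)/2) * Real.sign (x s))
      hderivIcc hx0 hgt ?_
    intro s hs hxs
    simp only [Real.sign_of_pos hxs, mul_one]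
    have hA : 0 < α₁ * |x s| + β₁ * |x s| ^ (3:ℝ) := by
      have h1 : 0 < |x s| := abs_pos.mpr hxs.ne'
      have h2 : 0 < |x s| ^ (3:ℝ) := Real.rpow_pos_of_pos h1 _
      positivity
    have := mul_pos (div_pos hγpos hT) (Real.rpow_pos_of_pos hA ((1:ℝ)/2))
    linarith
end

section
/- Let α, β, k > 0 and 0 < p < q with k·p < 1 and k·q > 1, and let γ := Γ((1−k·p)/(q−p))·Γ((k·q−1)/(q−p)) / (α^k·Γ(k)·(q−p)) · (α/β)^((1−k·p)/(q−p)). Let T_c > 0, let Φ : ℝ → ℝ be continuous and strictly positive on (0, ∞), integrable on (0, τ) for each τ > 0, with ∫₀^∞ Φ(ξ) dξ = 1, let ψ(τ) := T_c·∫₀^τ Φ(ξ) dξ with inverse ψ⁻¹ : [0, T_c) → [0, ∞), and let t₀ ∈ ℝ. Suppose x : ℝ → ℝ satisfies, for every t ∈ (t₀, t₀ + T_c), that x is differentiable at t with derivative x'(t) = −(1/(T_c·Φ(ψ⁻¹(t − t₀)))) · (α·|x(t)|^p + β·|x(t)|^q)^k · sign(x(t)), and x is continuous at t₀. Then x(t)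 = 0 for every t ∈ [t₀ + ψ(γ), t₀ + T_c). (Scalar prototype of the non-autonomous protocol of Theorem 5: the bounded time-varying gain enforces convergence strictly before the predefined time t₀ + T_c, with a less conservative settling-time bound t₀ + ψ(γ).) -/
open Real MeasureTheory Set

set_option maxHeartbeats 1000000

lemma realBeta_integrable {a b : ℝ} (ha : 0 < a) (hb : 0 < b) :
    IntegrableOn (fun x : ℝ => x ^ (a - 1) * (1 - x) ^ (b - 1)) (Ioo 0 1) := by
  have hc : IntervalIntegrable (fun x : ℝ => (x : ℂ) ^ ((a : ℂ) - 1) * ((1 : ℂ) - x) ^ ((b : ℂ) - 1))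
      volume 0 1 := Complex.betaIntegral_convergent (by simpa using ha) (by simpa using hb)
  have hIoc : IntegrableOn (fun x : ℝ => (x : ℂ) ^ ((a : ℂ) - 1) * ((1 : ℂ) - x) ^ ((b : ℂ) - 1))
      (Ioc 0 1) := by
    rw [intervalIntegrable_iff_integrableOn_Ioc_of_le (by norm_num)] at hc
    exact hc
  have hre := hIoc.re
  refine (IntegrableOn.mono_set hre Ioo_subset_Ioc_self).congr_fun ?_ measurableSet_Ioo
  intro x hx
  have hx0 : (0:ℝ) ≤ x := hx.1.le
  have hx1 : (0:ℝ) ≤ 1 - x := by linarith [hx.2]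
  have e1 : ((x : ℂ) ^ ((a : ℂ) - 1)) = ((x ^ (a - 1) : ℝ) : ℂ) := by
    rw [Complex.ofReal_cpow hx0]; push_cast; ring_nf
  have e2 : (((1 : ℂ) - x) ^ ((b : ℂ) - 1)) = (((1 - x) ^ (b - 1) : ℝ) : ℂ) := by
    rw [Complex.ofReal_cpow hx1]; push_cast; ring_nf
  simp [e1, e2, ← Complex.ofReal_mul]

lemma realBeta_value {a b : ℝ} (ha : 0 < a) (hb : 0 < b) :
    ∫ x in Ioo (0:ℝ) 1, x ^ (a - 1) * (1 - x) ^ (b - 1)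
      = Gamma a * Gamma b / Gamma (a + b) := by
  have key := Complex.Gamma_mul_Gamma_eq_betaIntegral
    (s := (a : ℂ)) (t := (b : ℂ)) (by simpa using ha) (by simpa using hb)
  have hβ : Complex.betaIntegral (a : ℂ) (b : ℂ)
      = ((∫ x in Ioo (0:ℝ) 1, x ^ (a - 1) * (1 - x) ^ (b - 1) : ℝ) : ℂ) := by
    rw [Complex.betaIntegral]
    rw [intervalIntegral.integral_of_le (by norm_num : (0:ℝ) ≤ 1),
      ← MeasureTheory.integral_Ioc_eq_integral_Ioo,
      show ((∫ t in Ioc (0:ℝ) 1, t ^ (a - 1) * (1 - t) ^ (b - 1) : ℝ) : ℂ)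
        = ∫ t in Ioc (0:ℝ) 1, ((t ^ (a - 1) * (1 - t) ^ (b - 1) : ℝ) : ℂ)
        from (integral_ofReal (𝕜 := ℂ)).symm]
    refine setIntegral_congr_fun measurableSet_Ioc ?_
    intro x hx
    have hx0 : (0:ℝ) ≤ x := hx.1.le
    have hx1 : (0:ℝ) ≤ 1 - x := by linarith [hx.2]
    have e1 : ((x : ℂ) ^ ((a : ℂ) - 1)) = ((x ^ (a - 1) : ℝ) : ℂ) := by
      rw [Complex.ofReal_cpow hx0]; push_cast; ring_nf
    have e2 : (((1 : ℂ) - x) ^ ((b : ℂ) - 1)) = (((1 - x) ^ (b - 1) : ℝ) : ℂ) := by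
      rw [Complex.ofReal_cpow hx1]; push_cast; ring_nf
    simp [e1, e2, ← Complex.ofReal_mul]
  rw [hβ] at key
  have hGab : Complex.Gamma ((a : ℂ) + b) = (Gamma (a + b) : ℂ) := by
    rw [← Complex.ofReal_add, Complex.Gamma_ofReal]
  rw [Complex.Gamma_ofReal, Complex.Gamma_ofReal, hGab, ← Complex.ofReal_mul,
    ← Complex.ofReal_mul] at key
  have := Complex.ofReal_inj.mp key
  have hne : Gamma (a + b) ≠ 0 := (Real.Gamma_pos_of_pos (by linarith)).ne'
  field_simp
  linarith [this]

lemma phi_image : (fun x : ℝ => x / (1 - x)) '' (Ioo 0 1) = Ioi 0 := by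
  ext u
  constructor
  · rintro ⟨x, ⟨hx0, hx1⟩, rfl⟩
    exact div_pos hx0 (by linarith)
  · intro (hu : (0:ℝ) < u)
    refine ⟨u / (1 + u), ⟨div_pos hu (by linarith [hu.le]), ?_⟩, ?_⟩
    · rw [div_lt_one (by linarith [hu.le])]; linarith [hu.le]
    · have hu' : (0:ℝ) < u := hu
      have h1 : (1:ℝ) + u ≠ 0 := by linarith
      have h2 : (1:ℝ) - u / (1 + u) = 1 / (1 + u) := by field_simp; ring
      simp only [h2]
      rw [div_div_div_eq, mul_one, mul_comm]
      rw [mul_div_assoc]; exact mul_div_cancel₀ u h1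

lemma phi_deriv : ∀ x ∈ Ioo (0:ℝ) 1,
    HasDerivWithinAt (fun x : ℝ => x / (1 - x)) (1 / (1 - x) ^ 2) (Ioo 0 1) x := by
  intro x hx
  have hne : (1:ℝ) - x ≠ 0 := by have := hx.2; intro h; linarith [h]
  have : HasDerivAt (fun y : ℝ => y / (1 - y)) ((1 * (1 - x) - x * (0 - 1)) / (1 - x) ^ 2) x :=
    (hasDerivAt_id x).div ((hasDerivAt_const x (1:ℝ)).sub (hasDerivAt_id x)) hne
  exact (this.congr_deriv (by congr 1; ring)).hasDerivWithinAt

lemma phi_inj : InjOn (fun x : ℝ => x / (1 - x)) (Ioo 0 1) := by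
  intro x hx y hy h
  have hx1 : (1:ℝ) - x ≠ 0 := by have := hx.2; intro hc; linarith
  have hy1 : (1:ℝ) - y ≠ 0 := by have := hy.2; intro hc; linarith
  field_simp at h
  linarith [h]

lemma betaIoi_value {a b : ℝ} (ha : 0 < a) (hb : 0 < b) :
    IntegrableOn (fun u : ℝ => u ^ (a - 1) * (1 + u) ^ (-(a + b))) (Ioi 0) ∧
    ∫ u in Ioi (0:ℝ), u ^ (a - 1) * (1 + u) ^ (-(a + b))
      = Gamma a * Gamma b / Gamma (a + b) := by
  have key : ∀ x ∈ Ioo (0:ℝ) 1,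
      |1 / (1 - x) ^ 2| • ((x / (1 - x)) ^ (a - 1) * (1 + x / (1 - x)) ^ (-(a + b)))
        = x ^ (a - 1) * (1 - x) ^ (b - 1) := by
    intro x hx
    have hx0 : (0:ℝ) < x := hx.1
    have ht : (0:ℝ) < 1 - x := by linarith [hx.2]
    have h1 : (1:ℝ) + x / (1 - x) = (1 - x)⁻¹ := by field_simp; ring
    have h2 : (x / (1 - x)) ^ (a - 1) = x ^ (a - 1) * (1 - x) ^ (-(a - 1)) := by
      rw [Real.div_rpow hx0.le ht.le, div_eq_mul_inv, Real.rpow_neg ht.le]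
    have h3 : ((1 - x)⁻¹) ^ (-(a + b)) = (1 - x) ^ (a + b) := by
      rw [Real.inv_rpow ht.le, Real.rpow_neg ht.le, inv_inv]
    have h4 : |1 / (1 - x) ^ 2| = (1 - x) ^ (-(2:ℝ)) := by
      rw [abs_of_pos (by positivity), one_div, ← Real.rpow_natCast (1 - x) 2,
        ← Real.rpow_neg ht.le]
      norm_num
    have h5 : (1 - x) ^ (-(2:ℝ)) * ((1 - x) ^ (-(a - 1)) * (1 - x) ^ (a + b))
        = (1 - x) ^ (b - 1) := by
      rw [← Real.rpow_add ht, ← Real.rpow_add ht]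
      congr 1
      ring
    rw [smul_eq_mul, h1, h2, h3, h4]
    calc (1 - x) ^ (-(2:ℝ)) * (x ^ (a - 1) * (1 - x) ^ (-(a - 1)) * (1 - x) ^ (a + b))
        = x ^ (a - 1) * ((1 - x) ^ (-(2:ℝ)) * ((1 - x) ^ (-(a - 1)) * (1 - x) ^ (a + b))) := by
          ring
      _ = x ^ (a - 1) * (1 - x) ^ (b - 1) := by rw [h5]
  constructor
  · rw [← phi_image,
      integrableOn_image_iff_integrableOn_abs_deriv_smul measurableSet_Ioo phi_deriv phi_inj]
    exact ((realBeta_integrable ha hb).congr_fun (fun x hx => (key x hx).symm) measurableSet_Ioo)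
  · rw [← phi_image,
      integral_image_eq_integral_abs_deriv_smul measurableSet_Ioo phi_deriv phi_inj,
      setIntegral_congr_fun measurableSet_Ioo key]
    exact realBeta_value ha hb

section A4
variable {α β k p q : ℝ}

lemma mainIntegral (hα : 0 < α) (hβ : 0 < β) (hk : 0 < k)
    (hp : 0 < p) (hpq : p < q) (hkp : k * p < 1) (hkq : 1 < k * q) :
    IntegrableOn (fun z : ℝ => (α * z ^ p + β * z ^ q) ^ (-k)) (Ioi 0) ∧
    ∫ z in Ioi (0:ℝ), (α * z ^ p + β * z ^ q) ^ (-k)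
      = Real.Gamma ((1 - k * p) / (q - p)) * Real.Gamma ((k * q - 1) / (q - p)) /
        (α ^ k * Real.Gamma k * (q - p)) * (α / β) ^ ((1 - k * p) / (q - p)) := by
  have hr : (0:ℝ) < q - p := by linarith
  set r : ℝ := q - p with hrdef
  set a : ℝ := (1 - k * p) / r with hadef
  set b : ℝ := (k * q - 1) / r with hbdef
  have ha : 0 < a := div_pos (by linarith) hr
  have hb : 0 < b := div_pos (by linarith) hr
  have hab : a + b = k := by
    rw [hadef, hbdef, ← add_div, hrdef]
    rw [div_eq_iff (sub_pos.mpr hpq).ne']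
    ring
  have hαβ : (0:ℝ) < α / β := div_pos hα hβ
  set m : ℝ := (α / β) ^ (1 / r) with hmdef
  have hm : 0 < m := Real.rpow_pos_of_pos hαβ _
  -- the substitution map
  set φ : ℝ → ℝ := fun u => m * u ^ (1 / r) with hφdef
  have hφim : φ '' Ioi 0 = Ioi 0 := by
    ext z
    constructor
    · rintro ⟨u, hu, rfl⟩
      exact mul_pos hm (Real.rpow_pos_of_pos hu _)
    · intro hz
      refine ⟨(z / m) ^ r, Real.rpow_pos_of_pos (div_pos hz hm) _, ?_⟩
      show m * ((z / m) ^ r) ^ (1 / r) = z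
      rw [one_div, Real.rpow_rpow_inv (div_pos hz hm).le hr.ne']
      field_simp
  have hφinj : InjOn φ (Ioi 0) := by
    intro u₁ h₁ u₂ h₂ h
    have h' : u₁ ^ (1 / r) = u₂ ^ (1 / r) := by
      simp only [hφdef] at h
      exact mul_left_cancel₀ hm.ne' h
    have := congrArg (fun w => w ^ r) h'
    simpa [one_div, Real.rpow_inv_rpow (le_of_lt h₁) hr.ne',
      Real.rpow_inv_rpow (le_of_lt h₂) hr.ne'] using this
  have hφder : ∀ u ∈ Ioi (0:ℝ),
      HasDerivWithinAt φ (m * (1 / r * u ^ (1 / r - 1))) (Ioi 0) u := by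
    intro u hu
    exact (((Real.hasDerivAt_rpow_const (p := 1 / r))
      (Or.inl (ne_of_gt hu))).const_mul m).hasDerivWithinAt
  -- pointwise identity
  have hpt : ∀ u ∈ Ioi (0:ℝ),
      |m * (1 / r * u ^ (1 / r - 1))| • ((α * (φ u) ^ p + β * (φ u) ^ q) ^ (-k))
      = (α / β) ^ a / (α ^ k * r) * (u ^ (a - 1) * (1 + u) ^ (-(a + b))) := by
    intro u hu
    have hu0 : (0:ℝ) < u := hu
    have hz : 0 < φ u := mul_pos hm (Real.rpow_pos_of_pos hu0 _)
    set z : ℝ := φ u with hzdef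
    have hzr : z ^ r = (α / β) * u := by
      rw [hzdef, hφdef]
      show (m * u ^ (1 / r)) ^ r = α / β * u
      rw [Real.mul_rpow hm.le (Real.rpow_nonneg hu0.le _), hmdef,
        ← Real.rpow_mul hαβ.le, ← Real.rpow_mul hu0.le, one_div,
        inv_mul_cancel₀ hr.ne', Real.rpow_one, Real.rpow_one]
    have hbase : α * z ^ p + β * z ^ q = α * z ^ p * (1 + u) := by
      have hq : z ^ q = z ^ p * z ^ r := by
        rw [← Real.rpow_add hz]; congr 1; rw [hrdef]; ring
      rw [hq, hzr]
      field_simp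
    have hzp : (0:ℝ) < z ^ p := Real.rpow_pos_of_pos hz _
    have hfz : (α * z ^ p + β * z ^ q) ^ (-k)
        = α ^ (-k) * z ^ (p * -k) * (1 + u) ^ (-k) := by
      rw [hbase, Real.mul_rpow (by positivity) (by positivity),
        Real.mul_rpow hα.le hzp.le, ← Real.rpow_mul hz.le]
    have hzpk : z ^ (p * -k) = m ^ (p * -k) * u ^ (1 / r * (p * -k)) := by
      rw [hzdef, hφdef]
      show (m * u ^ (1 / r)) ^ (p * -k) = _
      rw [Real.mul_rpow hm.le (Real.rpow_nonneg hu0.le _), ← Real.rpow_mul hu0.le]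
    have e1 : m * m ^ (p * -k) = (α / β) ^ a := by
      nth_rewrite 1 [← Real.rpow_one m]
      rw [← Real.rpow_add hm, hmdef, ← Real.rpow_mul hαβ.le]
      congr 1
      rw [hadef]
      field_simp
      ring
    have e2 : u ^ (1 / r - 1) * u ^ (1 / r * (p * -k)) = u ^ (a - 1) := by
      rw [← Real.rpow_add hu0]
      congr 1
      rw [hadef]
      field_simp
      ring
    have e3 : α ^ (-k) = (α ^ k)⁻¹ := Real.rpow_neg hα.le k
    have habs : |m * (1 / r * u ^ (1 / r - 1))| = m * (1 / r * u ^ (1 / r - 1)) := by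
      refine abs_of_pos ?_
      have := Real.rpow_pos_of_pos hu0 (1 / r - 1)
      positivity
    rw [smul_eq_mul, habs, hfz, hzpk, e3]
    have hαk : (0:ℝ) < α ^ k := Real.rpow_pos_of_pos hα _
    calc m * (1 / r * u ^ (1 / r - 1)) * ((α ^ k)⁻¹ * (m ^ (p * -k) * u ^ (1 / r * (p * -k))) * (1 + u) ^ (-k))
        = (m * m ^ (p * -k)) / (α ^ k * r) * ((u ^ (1 / r - 1) * u ^ (1 / r * (p * -k))) * (1 + u) ^ (-k)) := by
          field_simp
      _ = (α / β) ^ a / (α ^ k * r) * (u ^ (a - 1) * (1 + u) ^ (-k)) := by rw [e1, e2]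
      _ = (α / β) ^ a / (α ^ k * r) * (u ^ (a - 1) * (1 + u) ^ (-(a + b))) := by rw [hab]
  obtain ⟨hBint, hBval⟩ := betaIoi_value ha hb
  constructor
  · rw [← hφim, integrableOn_image_iff_integrableOn_abs_deriv_smul measurableSet_Ioi hφder hφinj]
    have h1 : IntegrableOn (fun u : ℝ => (α / β) ^ a / (α ^ k * r) *
        (u ^ (a - 1) * (1 + u) ^ (-(a + b)))) (Ioi 0) :=
      hBint.const_mul _
    exact h1.congr_fun (fun u hu => (hpt u hu).symm) measurableSet_Ioi
  · rw [← hφim, integral_image_eq_integral_abs_deriv_smul measurableSet_Ioi hφder hφinj,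
      setIntegral_congr_fun measurableSet_Ioi hpt, integral_const_mul, hBval, hab]
    have hαk : (0:ℝ) < α ^ k := Real.rpow_pos_of_pos hα _
    have hΓk : (0:ℝ) < Real.Gamma k := Real.Gamma_pos_of_pos hk
    field_simp

end A4

/-- Scalar prototype of the non-autonomous protocol of Theorem 5: the bounded
time-varying gain `1/(T_c Φ(ψ⁻¹(t − t₀)))` enforces convergence of the scalar
dynamics strictly before the predefined time `t₀ + T_c`, with the less
conservative settling-time bound `t₀ + ψ(γ)`. -/
theorem nonautonomous_scalar_predefined_time
    (α β k p q : ℝ) (hα : 0 < α) (hβ : 0 < β) (hk : 0 < k)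
    (hp : 0 < p) (hpq : p < q) (hkp : k * p < 1) (hkq : 1 < k * q)
    (γ : ℝ)
    (hγ : γ = Real.Gamma ((1 - k * p) / (q - p)) * Real.Gamma ((k * q - 1) / (q - p)) /
        (α ^ k * Real.Gamma k * (q - p)) * (α / β) ^ ((1 - k * p) / (q - p)))
    (Tc : ℝ) (hTc : 0 < Tc)
    (Φ : ℝ → ℝ)
    (hcont : ContinuousOn Φ (Set.Ioi 0))
    (hpos : ∀ τ : ℝ, 0 < τ → 0 < Φ τ)
    (hloc : ∀ τ : ℝ, 0 < τ → IntegrableOn Φ (Set.Ioc 0 τ))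
    (hIoi : IntegrableOn Φ (Set.Ioi 0))
    (hone : ∫ ξ in Set.Ioi (0 : ℝ), Φ ξ = 1)
    (ψ : ℝ → ℝ)
    (hψ : ∀ τ : ℝ, ψ τ = Tc * ∫ ξ in (0 : ℝ)..τ, Φ ξ)
    (ψinv : ℝ → ℝ)
    (hinv_left : ∀ τ : ℝ, 0 ≤ τ → ψinv (ψ τ) = τ)
    (hinv_right : ∀ s ∈ Set.Ico (0 : ℝ) Tc, 0 ≤ ψinv s ∧ ψ (ψinv s) = s)
    (t₀ : ℝ)
    (x : ℝ → ℝ)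
    (hx : ∀ t ∈ Set.Ioo t₀ (t₀ + Tc),
      HasDerivAt x
        (-(1 / (Tc * Φ (ψinv (t - t₀)))) *
          (α * |x t| ^ p + β * |x t| ^ q) ^ k * Real.sign (x t)) t)
    (hx₀ : ContinuousAt x t₀) :
    ∀ t ∈ Set.Ico (t₀ + ψ γ) (t₀ + Tc), x t = 0 := by
  have hr : (0:ℝ) < q - p := by linarith
  -- positivity of γ
  have hγpos : 0 < γ := by
    rw [hγ]
    have h1 := Real.Gamma_pos_of_pos (div_pos (by linarith : (0:ℝ) < 1 - k * p) hr)
    have h2 := Real.Gamma_pos_of_pos (div_pos (by linarith : (0:ℝ) < k * q - 1) hr)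
    have h3 := Real.Gamma_pos_of_pos hk
    have h4 : (0:ℝ) < α ^ k := Real.rpow_pos_of_pos hα _
    have h5 : (0:ℝ) < (α / β) ^ ((1 - k * p) / (q - p)) :=
      Real.rpow_pos_of_pos (div_pos hα hβ) _
    positivity
  -- ψ basic facts
  have hψ0 : ψ 0 = 0 := by rw [hψ]; simp
  have hψIoc : ∀ σ : ℝ, 0 ≤ σ → ψ σ = Tc * ∫ ξ in Ioc (0:ℝ) σ, Φ ξ := by
    intro σ hσ
    rw [hψ, intervalIntegral.integral_of_le hσ]
  have hΦnn : ∀ σ : ℝ, (fun _ : ℝ => (0:ℝ)) ≤ᵐ[volume.restrict (Ioc 0 σ)] Φ := by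
    intro σ
    filter_upwards [ae_restrict_mem measurableSet_Ioc] with u hu
    exact (hpos u hu.1).le
  have hψmono : ∀ σ₁ σ₂ : ℝ, 0 ≤ σ₁ → σ₁ ≤ σ₂ → ψ σ₁ ≤ ψ σ₂ := by
    intro σ₁ σ₂ h1 h12
    rcases eq_or_lt_of_le (h1.trans h12) with h2 | h2
    · have : σ₁ = 0 := le_antisymm (by linarith [h2]) h1
      rw [this, ← h2]
    · rw [hψIoc σ₁ h1, hψIoc σ₂ (h1.trans h12)]
      refine mul_le_mul_of_nonneg_left ?_ hTc.le
      refine setIntegral_mono_set (hloc σ₂ h2) (hΦnn σ₂) ?_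
      exact HasSubset.Subset.eventuallyLE (Ioc_subset_Ioc_right h12)
  have hψpos : ∀ σ : ℝ, 0 < σ → 0 < ψ σ := by
    intro σ hσ
    rw [hψIoc σ hσ.le]
    refine mul_pos hTc ?_
    rw [setIntegral_pos_iff_support_of_nonneg_ae (hΦnn σ) (hloc σ hσ)]
    have hsub : Ioc 0 σ ⊆ Function.support Φ ∩ Ioc 0 σ := by
      intro u hu
      exact ⟨(hpos u hu.1).ne', hu⟩
    calc (0:ENNReal) < volume (Ioc 0 σ) := by simp [hσ]
      _ ≤ volume (Function.support Φ ∩ Ioc 0 σ) := measure_mono hsub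
  have hIoiγ : IntegrableOn Φ (Ioi γ) := hIoi.mono_set (Ioi_subset_Ioi hγpos.le)
  have hψγTc : ψ γ < Tc := by
    have hsplit : ∫ ξ in Ioi (0:ℝ), Φ ξ
        = (∫ ξ in Ioc (0:ℝ) γ, Φ ξ) + ∫ ξ in Ioi γ, Φ ξ := by
      rw [← setIntegral_union (Ioc_disjoint_Ioi le_rfl) measurableSet_Ioi
        (hloc γ hγpos) hIoiγ, Ioc_union_Ioi_eq_Ioi hγpos.le]
    have hpos2 : 0 < ∫ ξ in Ioi γ, Φ ξ := by
      have hnn : (fun _ : ℝ => (0:ℝ)) ≤ᵐ[volume.restrict (Ioi γ)] Φ := by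
        filter_upwards [ae_restrict_mem measurableSet_Ioi] with u hu
        exact (hpos u (hγpos.trans hu)).le
      rw [setIntegral_pos_iff_support_of_nonneg_ae hnn hIoiγ]
      have hsub : Ioi γ ⊆ Function.support Φ ∩ Ioi γ :=
        fun u hu => ⟨(hpos u (hγpos.trans hu)).ne', hu⟩
      calc (0:ENNReal) < volume (Ioi γ) := by simp
        _ ≤ volume (Function.support Φ ∩ Ioi γ) := measure_mono hsub
    have : ∫ ξ in Ioc (0:ℝ) γ, Φ ξ < 1 := by rw [hone] at hsplit; linarith
    rw [hψIoc γ hγpos.le]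
    calc Tc * ∫ ξ in Ioc (0:ℝ) γ, Φ ξ < Tc * 1 := by
          exact mul_lt_mul_of_pos_left this hTc
      _ = Tc := mul_one Tc
  -- membership of the time-changed curve
  have htmem : ∀ σ : ℝ, 0 < σ → σ ≤ γ → t₀ + ψ σ ∈ Ioo t₀ (t₀ + Tc) := by
    intro σ h0 hγ'
    constructor
    · linarith [hψpos σ h0]
    · have := hψmono σ γ h0.le hγ'
      linarith
  -- positivity of the gain
  have hinvpos : ∀ u : ℝ, u ∈ Ioo t₀ (t₀ + Tc) → 0 < ψinv (u - t₀) := by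
    intro u hu
    obtain ⟨hnn, heq⟩ := hinv_right (u - t₀) ⟨by linarith [hu.1], by linarith [hu.2]⟩
    rcases eq_or_lt_of_le hnn with h | h
    · exfalso
      rw [← h, hψ0] at heq
      have := hu.1
      linarith
    · exact h
  have hgain : ∀ u : ℝ, u ∈ Ioo t₀ (t₀ + Tc) → 0 < Tc * Φ (ψinv (u - t₀)) :=
    fun u hu => mul_pos hTc (hpos _ (hinvpos u hu))
  -- |x|² is nonincreasing on (t₀, t₀ + Tc)
  have hsq : ∀ s t : ℝ, t₀ < s → s ≤ t → t < t₀ + Tc → x t ^ 2 ≤ x s ^ 2 := by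
    intro s t hs hst htt
    have hsub : Icc s t ⊆ Ioo t₀ (t₀ + Tc) :=
      fun u hu => ⟨lt_of_lt_of_le hs hu.1, lt_of_le_of_lt hu.2 htt⟩
    have hconts : ContinuousOn (fun u => x u ^ 2) (Icc s t) := by
      intro u hu
      exact (((hx u (hsub hu)).continuousAt).pow 2).continuousWithinAt
    have hdiff : DifferentiableOn ℝ (fun u => x u ^ 2) (interior (Icc s t)) := by
      rw [interior_Icc]
      intro u hu
      exact (((hx u (hsub (Ioo_subset_Icc_self hu))).pow 2).differentiableAt).differentiableWithinAt
    have hderiv : ∀ u ∈ interior (Icc s t), deriv (fun u => x u ^ 2) u ≤ 0 := by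
      rw [interior_Icc]
      intro u hu
      have hd : HasDerivAt (fun u => x u ^ 2) _ u := (hx u (hsub (Ioo_subset_Icc_self hu))).pow 2
      rw [hd.deriv]
      have hg := hgain u (hsub (Ioo_subset_Icc_self hu))
      have hxs : 0 ≤ x u * Real.sign (x u) := by
        rcases lt_trichotomy (x u) 0 with h | h | h
        · rw [Real.sign_of_neg h]; nlinarith
        · simp [h]
        · rw [Real.sign_of_pos h]; nlinarith
      have hCk : (0:ℝ) ≤ (α * |x u| ^ p + β * |x u| ^ q) ^ k :=
        Real.rpow_nonneg (by positivity) _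
      have hginv : (0:ℝ) ≤ 1 / (Tc * Φ (ψinv (u - t₀))) := by positivity
      have heq : (2:ℕ) * x u ^ (2 - 1) *
          (-(1 / (Tc * Φ (ψinv (u - t₀)))) * (α * |x u| ^ p + β * |x u| ^ q) ^ k
            * Real.sign (x u))
          = -(2 * ((1 / (Tc * Φ (ψinv (u - t₀)))) *
            ((α * |x u| ^ p + β * |x u| ^ q) ^ k * (x u * Real.sign (x u))))) := by
        push_cast
        ring
      rw [heq, neg_nonpos]
      have := mul_nonneg hCk hxs
      have := mul_nonneg hginv this
      linarith
    have hanti := antitoneOn_of_deriv_nonpos (convex_Icc s t) hconts hdiff hderiv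
    exact hanti ⟨le_rfl, hst⟩ ⟨hst, le_rfl⟩ hst
  -- derivative of ψ
  have hψder : ∀ σ : ℝ, 0 < σ → HasDerivAt ψ (Tc * Φ σ) σ := by
    intro σ hσ
    have hint : IntervalIntegrable Φ volume 0 σ :=
      (intervalIntegrable_iff_integrableOn_Ioc_of_le hσ.le).mpr (hloc σ hσ)
    have hcΦ : ContinuousAt Φ σ := hcont.continuousAt (Ioi_mem_nhds hσ)
    have hmeas : StronglyMeasurableAtFilter Φ (nhds σ) := by
      refine ⟨Ioi 0, Ioi_mem_nhds hσ, ?_⟩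
      exact (hcont.aestronglyMeasurable measurableSet_Ioi)
    have hFTC := intervalIntegral.integral_hasDerivAt_right hint hmeas hcΦ
    have : ψ = fun τ => Tc * ∫ ξ in (0:ℝ)..τ, Φ ξ := funext hψ
    rw [this]
    exact hFTC.const_mul Tc
  -- the integrand F and its primitive G
  set F : ℝ → ℝ := fun z => (α * |z| ^ p + β * |z| ^ q) ^ (-k) with hFdef
  obtain ⟨hfint, hfval⟩ := mainIntegral hα hβ hk hp hpq hkp hkq
  have hFeq : EqOn (fun z : ℝ => (α * z ^ p + β * z ^ q) ^ (-k)) F (Ioi 0) := by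
    intro z hz
    have : |z| = z := abs_of_pos hz
    simp [hFdef, this]
  have hFint : IntegrableOn F (Ioi 0) := hfint.congr_fun hFeq measurableSet_Ioi
  have hFval : ∫ z in Ioi (0:ℝ), F z = γ := by
    rw [← setIntegral_congr_fun measurableSet_Ioi hFeq, hfval, hγ]
  have hFnn : ∀ z : ℝ, 0 ≤ F z := fun z => Real.rpow_nonneg (by positivity) _
  have hFposIoi : ∀ z : ℝ, 0 < z → 0 < F z := by
    intro z hz
    refine Real.rpow_pos_of_pos ?_ _
    have : 0 < |z| := abs_pos.mpr hz.ne'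
    positivity
  set G : ℝ → ℝ := fun v => ∫ z in Ioc (0:ℝ) v, F z with hGdef
  have hGnonneg : ∀ v : ℝ, 0 ≤ G v := by
    intro v
    refine setIntegral_nonneg measurableSet_Ioc fun z _ => hFnn z
  have hGmono : ∀ v₁ v₂ : ℝ, v₁ ≤ v₂ → G v₁ ≤ G v₂ := by
    intro v₁ v₂ h12
    refine setIntegral_mono_set (hFint.mono_set Ioc_subset_Ioi_self) ?_
      (HasSubset.Subset.eventuallyLE (Ioc_subset_Ioc_right h12))
    filter_upwards with z using hFnn z
  have hGlt : ∀ v : ℝ, 0 ≤ v → G v < γ := by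
    intro v hv
    have hIoiv : IntegrableOn F (Ioi v) := hFint.mono_set (Ioi_subset_Ioi hv)
    have hsplit : ∫ z in Ioi (0:ℝ), F z = G v + ∫ z in Ioi v, F z := by
      rw [hGdef, ← setIntegral_union (Ioc_disjoint_Ioi le_rfl) measurableSet_Ioi
        (hFint.mono_set Ioc_subset_Ioi_self) hIoiv, Ioc_union_Ioi_eq_Ioi hv]
    have hpos2 : 0 < ∫ z in Ioi v, F z := by
      have hnn : (fun _ : ℝ => (0:ℝ)) ≤ᵐ[volume.restrict (Ioi v)] F := by
        filter_upwards with z using hFnn z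
      rw [setIntegral_pos_iff_support_of_nonneg_ae hnn hIoiv]
      have hsub : Ioi v ⊆ Function.support F ∩ Ioi v :=
        fun z hz => ⟨(hFposIoi z (lt_of_le_of_lt hv hz)).ne', hz⟩
      calc (0:ENNReal) < volume (Ioi v) := by simp
        _ ≤ volume (Function.support F ∩ Ioi v) := measure_mono hsub
    rw [hFval] at hsplit
    linarith
  have hGder : ∀ w : ℝ, 0 < w → HasDerivAt G (F w) w := by
    intro w hw
    have hint : IntervalIntegrable F volume 0 w :=
      (intervalIntegrable_iff_integrableOn_Ioc_of_le hw.le).mpr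
        (hFint.mono_set Ioc_subset_Ioi_self)
    have hFcont : ContinuousAt F w := by
      have habs : (0:ℝ) < |w| := abs_pos.mpr hw.ne'
      have h1 : ContinuousAt (fun z : ℝ => |z| ^ p) w :=
        ContinuousAt.rpow_const (continuous_abs.continuousAt) (Or.inl habs.ne')
      have h2 : ContinuousAt (fun z : ℝ => |z| ^ q) w :=
        ContinuousAt.rpow_const (continuous_abs.continuousAt) (Or.inl habs.ne')
      have hbase : ContinuousAt (fun z : ℝ => α * |z| ^ p + β * |z| ^ q) w :=
        ((h1.const_mul α).add (h2.const_mul β))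
      have hbpos : (0:ℝ) < α * |w| ^ p + β * |w| ^ q := by positivity
      exact ContinuousAt.rpow_const hbase (Or.inl hbpos.ne')
    have hmeas : StronglyMeasurableAtFilter F (nhds w) := by
      refine ⟨Ioi 0, Ioi_mem_nhds hw, ?_⟩
      refine ContinuousOn.aestronglyMeasurable ?_ measurableSet_Ioi
      intro z hz
      have habs : (0:ℝ) < |z| := abs_pos.mpr (ne_of_gt hz)
      have h1 : ContinuousAt (fun z : ℝ => |z| ^ p) z :=
        ContinuousAt.rpow_const (continuous_abs.continuousAt) (Or.inl habs.ne')
      have h2 : ContinuousAt (fun z : ℝ => |z| ^ q) z :=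
        ContinuousAt.rpow_const (continuous_abs.continuousAt) (Or.inl habs.ne')
      have hbpos : (0:ℝ) < α * |z| ^ p + β * |z| ^ q := by positivity
      exact (ContinuousAt.rpow_const ((h1.const_mul α).add (h2.const_mul β))
        (Or.inl hbpos.ne')).continuousWithinAt
    have hFTC := intervalIntegral.integral_hasDerivAt_right hint hmeas hFcont
    have hobs : (fun v => ∫ z in (0:ℝ)..v, F z) =ᶠ[nhds w] G := by
      filter_upwards [Ioi_mem_nhds hw] with v hv
      rw [intervalIntegral.integral_of_le (le_of_lt hv)]
    exact hFTC.congr_of_eventuallyEq hobs.symm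
  -- existence of a zero before time t₀ + ψ γ
  have hzero : ∃ σ₁ ∈ Ioc (0:ℝ) γ, x (t₀ + ψ σ₁) = 0 := by
    by_contra hcon
    push_neg at hcon
    -- derivative of the Lyapunov-like function along the reparametrised flow
    have hVder : ∀ σ : ℝ, 0 < σ → σ ≤ γ →
        HasDerivAt (fun τ => G |x (t₀ + ψ τ)| + τ) 0 σ := by
      intro σ hσ0 hσγ
      have hmem := htmem σ hσ0 hσγ
      have hxd := hx _ hmem
      have hinvσ : ψinv (t₀ + ψ σ - t₀) = σ := by
        rw [add_sub_cancel_left]; exact hinv_left σ hσ0.le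
      rw [hinvσ] at hxd
      have hgd : HasDerivAt (fun τ => t₀ + ψ τ) (Tc * Φ σ) σ := (hψder σ hσ0).const_add t₀
      have hyd : HasDerivAt (fun τ => x (t₀ + ψ τ))
          ((-(1 / (Tc * Φ σ)) *
            (α * |x (t₀ + ψ σ)| ^ p + β * |x (t₀ + ψ σ)| ^ q) ^ k *
              Real.sign (x (t₀ + ψ σ))) * (Tc * Φ σ)) σ := hxd.comp σ hgd
      have hyne : x (t₀ + ψ σ) ≠ 0 := hcon σ ⟨hσ0, hσγ⟩
      have habsd : HasDerivAt (fun τ => |x (t₀ + ψ τ)|)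
          ((SignType.sign (x (t₀ + ψ σ)) : ℝ) *
            ((-(1 / (Tc * Φ σ)) *
              (α * |x (t₀ + ψ σ)| ^ p + β * |x (t₀ + ψ σ)| ^ q) ^ k *
                Real.sign (x (t₀ + ψ σ))) * (Tc * Φ σ))) σ :=
        ((hasDerivAt_abs hyne).comp σ hyd :)
      have hGd := hGder (|x (t₀ + ψ σ)|) (abs_pos.mpr hyne)
      have hVd := (hGd.comp σ habsd).add (hasDerivAt_id σ)
      have hCpos : 0 < α * |x (t₀ + ψ σ)| ^ p + β * |x (t₀ + ψ σ)| ^ q := by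
        have := abs_pos.mpr hyne
        positivity
      have hg : 0 < Tc * Φ σ := mul_pos hTc (hpos σ hσ0)
      have e1 : F (|x (t₀ + ψ σ)|) *
          (α * |x (t₀ + ψ σ)| ^ p + β * |x (t₀ + ψ σ)| ^ q) ^ k = 1 := by
        have hFy : F (|x (t₀ + ψ σ)|)
            = (α * |x (t₀ + ψ σ)| ^ p + β * |x (t₀ + ψ σ)| ^ q) ^ (-k) := by
          rw [hFdef]
          simp only [abs_abs]
        rw [hFy, Real.rpow_neg hCpos.le]
        exact inv_mul_cancel₀ (Real.rpow_pos_of_pos hCpos k).ne'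
      have e2 : (SignType.sign (x (t₀ + ψ σ)) : ℝ) * Real.sign (x (t₀ + ψ σ)) = 1 := by
        rcases lt_trichotomy (x (t₀ + ψ σ)) 0 with h | h | h
        · rw [sign_neg h, Real.sign_of_neg h]; norm_num
        · exact absurd h hyne
        · rw [sign_pos h, Real.sign_of_pos h]; norm_num
      have e3 : 1 / (Tc * Φ σ) * (Tc * Φ σ) = 1 := one_div_mul_cancel hg.ne'
      have key : F (|x (t₀ + ψ σ)|) *
          ((SignType.sign (x (t₀ + ψ σ)) : ℝ) *
            ((-(1 / (Tc * Φ σ)) *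
              (α * |x (t₀ + ψ σ)| ^ p + β * |x (t₀ + ψ σ)| ^ q) ^ k *
                Real.sign (x (t₀ + ψ σ))) * (Tc * Φ σ))) + 1 = 0 := by
        have expand : F (|x (t₀ + ψ σ)|) *
            ((SignType.sign (x (t₀ + ψ σ)) : ℝ) *
              ((-(1 / (Tc * Φ σ)) *
                (α * |x (t₀ + ψ σ)| ^ p + β * |x (t₀ + ψ σ)| ^ q) ^ k *
                  Real.sign (x (t₀ + ψ σ))) * (Tc * Φ σ)))
            = -((F (|x (t₀ + ψ σ)|) *
                (α * |x (t₀ + ψ σ)| ^ p + β * |x (t₀ + ψ σ)| ^ q) ^ k) *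
              ((SignType.sign (x (t₀ + ψ σ)) : ℝ) * Real.sign (x (t₀ + ψ σ))) *
              (1 / (Tc * Φ σ) * (Tc * Φ σ))) := by ring
        rw [expand, e1, e2, e3]
        norm_num
      have hVd' := hVd
      rw [key] at hVd'
      exact hVd'
    -- limiting filter at 0⁺
    set c : ℝ := min γ 1 with hcdef
    have hc0 : 0 < c := lt_min hγpos one_pos
    set L : Filter ℝ := nhdsWithin 0 (Ioo (0:ℝ) c) with hLdef
    have hLne : L.NeBot := by
      apply mem_closure_iff_nhdsWithin_neBot.mp
      rw [closure_Ioo hc0.ne]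
      exact ⟨le_rfl, hc0.le⟩
    have hIcc1 : IntegrableOn Φ (Icc 0 1) := by
      rw [integrableOn_Icc_iff_integrableOn_Ioc]
      exact hloc 1 one_pos
    have hprim : ContinuousOn (fun v => ∫ t in Ioc (0:ℝ) v, Φ t) (Icc 0 1) :=
      intervalIntegral.continuousOn_primitive hIcc1
    have hψcw : ContinuousWithinAt ψ (Icc 0 1) 0 := by
      have h0 : ContinuousWithinAt (fun v => Tc * ∫ t in Ioc (0:ℝ) v, Φ t) (Icc 0 1) 0 :=
        continuousWithinAt_const.mul (hprim 0 ⟨le_rfl, zero_le_one⟩)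
      refine h0.congr (fun y hy => hψIoc y hy.1) ?_
      rw [hψ0]
      simp
    have hψtendL : Filter.Tendsto ψ L (nhds 0) := by
      have h1 := hψcw.tendsto
      rw [hψ0] at h1
      exact h1.mono_left (nhdsWithin_mono 0
        (fun u hu => ⟨hu.1.le, hu.2.le.trans (min_le_right _ _)⟩))
    have hytend : Filter.Tendsto (fun ε => x (t₀ + ψ ε)) L (nhds (x t₀)) := by
      have h1 : Filter.Tendsto (fun ε => t₀ + ψ ε) L (nhds (t₀ + 0)) :=
        tendsto_const_nhds.add hψtendL
      rw [add_zero] at h1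
      exact hx₀.tendsto.comp h1
    have E1 : ∀ᶠ ε in L, ε ∈ Ioo (0:ℝ) c := eventually_mem_nhdsWithin
    have E2 : ∀ᶠ ε in L, |x (t₀ + ψ ε)| ≤ |x t₀| + 1 :=
      hytend.abs.eventually (eventually_le_nhds (lt_add_one _))
    have hclaim : ∀ δ : ℝ, 0 < δ → γ ≤ G (|x t₀| + 1) + δ := by
      intro δ hδ
      have E3 : ∀ᶠ ε in L, ε < δ := by
        have hid : Filter.Tendsto (fun ε : ℝ => ε) L (nhds 0) :=
          Filter.tendsto_id.mono_left nhdsWithin_le_nhds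
        exact hid.eventually (eventually_lt_nhds hδ)
      obtain ⟨ε, hεI, hεy, hεδ⟩ := (E1.and (E2.and E3)).exists
      have hε0 : 0 < ε := hεI.1
      have hεγ : ε < γ := lt_of_lt_of_le hεI.2 (min_le_left _ _)
      have hVcont : ContinuousOn (fun τ => G |x (t₀ + ψ τ)| + τ) (Icc ε γ) := by
        intro u hu
        exact (hVder u (lt_of_lt_of_le hε0 hu.1) hu.2).continuousAt.continuousWithinAt
      have hVd : ∀ u ∈ Ioo ε γ, HasDerivAt (fun τ => G |x (t₀ + ψ τ)| + τ) 0 u :=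
        fun u hu => hVder u (hε0.trans hu.1) hu.2.le
      obtain ⟨cc, hcc, hceq⟩ := exists_hasDerivAt_eq_slope
        (fun τ => G |x (t₀ + ψ τ)| + τ) (fun _ => (0:ℝ)) hεγ hVcont hVd
      have hVeq : G |x (t₀ + ψ γ)| + γ = G |x (t₀ + ψ ε)| + ε := by
        rcases div_eq_zero_iff.mp hceq.symm with h | h
        · linarith [sub_eq_zero.mp h]
        · exfalso; exact (sub_ne_zero.mpr (ne_of_gt hεγ)) h
      have h1 : γ ≤ G |x (t₀ + ψ γ)| + γ := by linarith [hGnonneg (|x (t₀ + ψ γ)|)]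
      have h2 : G |x (t₀ + ψ ε)| ≤ G (|x t₀| + 1) := hGmono _ _ hεy
      linarith
    have hL : G (|x t₀| + 1) < γ := hGlt (|x t₀| + 1) (by positivity)
    have : γ ≤ G (|x t₀| + 1) := by
      by_contra h'
      push_neg at h'
      have := hclaim ((γ - G (|x t₀| + 1)) / 2) (by linarith)
      linarith
    linarith
  -- conclusion
  intro T hT
  obtain ⟨σ₁, hσ₁, hx1⟩ := hzero
  have h1 : t₀ < t₀ + ψ σ₁ := by linarith [hψpos σ₁ hσ₁.1]
  have h2 : t₀ + ψ σ₁ ≤ T := by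
    have := hψmono σ₁ γ hσ₁.1.le hσ₁.2
    have := hT.1
    linarith
  have h3 := hsq (t₀ + ψ σ₁) T h1 h2 hT.2
  rw [hx1] at h3
  have h4 : x T ^ 2 = 0 := le_antisymm (by simpa using h3) (sq_nonneg _)
  exact pow_eq_zero_iff (two_ne_zero) |>.mp h4
end
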